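/- Let n ≥ 1 be a natural number. Let ϖ⁽¹⁾,…,ϖ⁽ⁿ⁾ : ℝⁿ → ℝ be continuously differentiable functions that are 2-homogeneous, i.e. ϖ⁽ⁱ⁾(t·x) = t²·ϖ⁽ⁱ⁾(x) for all t ∈ ℝ and x ∈ ℝⁿ. Let u : ℝⁿ → ℝ be twice continuously differentiable and satisfy Σ_{i=1}^{n} (∂u/∂x_i)(x)·(ϖ⁽ⁱ⁾(x) − x_i) = −u(x) for all x ∈ ℝⁿ. Define 𝒰(x) = Σ_{i=1}^{n} x_i·(∂u/∂x_i)(x) − u(x). Then Σ_{i=1}^{n} (∂𝒰/∂x_i)(x)·(ϖ⁽ⁱ⁾(x) − x_i) = −2·𝒰(x) for all x ∈ ℝⁿ. -/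

import Mathlib

open scoped BigOperators

/-- If `u` solves `∑ i, uₓᵢ·(ϖ⁽ⁱ⁾ − xᵢ) = −u` with 2-homogeneous `C¹`
vector field components `ϖ⁽ⁱ⁾`, then `𝒰 = ∑ i, xᵢ·uₓᵢ − u` solves the same PDE
with an extra factor 2. -/
theorem stmt_0 (n : ℕ) (hn : 1 ≤ n)
    (ϖ : Fin n → (Fin n → ℝ) → ℝ)
    (hϖ : ∀ i, ContDiff ℝ 1 (ϖ i))
    (hhom : ∀ (i : Fin n) (t : ℝ) (x : Fin n → ℝ), ϖ i (t • x) = t ^ 2 * ϖ i x)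
    (u : (Fin n → ℝ) → ℝ) (hu : ContDiff ℝ 2 u)
    (hpde : ∀ x : Fin n → ℝ,
      ∑ i, fderiv ℝ u x (Pi.single i 1) * (ϖ i x - x i) = -u x)
    (U : (Fin n → ℝ) → ℝ)
    (hU : ∀ x : Fin n → ℝ,
      U x = ∑ i, x i * fderiv ℝ u x (Pi.single i 1) - u x) :
    ∀ x : Fin n → ℝ,
      ∑ i, fderiv ℝ U x (Pi.single i 1) * (ϖ i x - x i) = -2 * U x := by
  classical
  have hud : Differentiable ℝ u := hu.differentiable two_ne_zero
  have hDu : ContDiff ℝ 1 (fderiv ℝ u) := hu.fderiv_right (le_refl 2)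
  have hDud : Differentiable ℝ (fderiv ℝ u) := hDu.differentiable one_ne_zero
  have hϖd : ∀ i, Differentiable ℝ (ϖ i) := fun i => (hϖ i).differentiable one_ne_zero
  intro x
  set e : Fin n → (Fin n → ℝ) := fun i => (Pi.single i 1 : Fin n → ℝ) with he
  set D2 := fderiv ℝ (fderiv ℝ u) x with hD2
  have hsymm : ∀ v w, D2 v w = D2 w v :=
    second_derivative_symmetric (fun y => (hud y).hasFDerivAt) (hDud x).hasFDerivAt
  have hproj : ∀ i : Fin n, HasFDerivAt (fun y : Fin n → ℝ => y i)
      (ContinuousLinearMap.proj i : (Fin n → ℝ) →L[ℝ] ℝ) x := by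
    intro i
    exact (ContinuousLinearMap.proj i : (Fin n → ℝ) →L[ℝ] ℝ).hasFDerivAt
  -- expand a linear functional over the basis
  have hx : (∑ i, x i • e i) = x := by
    funext k
    simp [he, Finset.sum_apply, Pi.single_apply, mul_ite]
  have expand : ∀ (L : (Fin n → ℝ) →L[ℝ] ℝ), L x = ∑ i, x i * L (e i) := by
    intro L
    conv_lhs => rw [← hx]
    rw [map_sum]
    simp [smul_eq_mul]
  -- Euler identity for 2-homogeneous functions
  have euler : ∀ j, fderiv ℝ (ϖ j) x x = 2 * ϖ j x := by
    intro j
    have h1 : HasDerivAt (fun t : ℝ => t • x) x 1 := by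
      simpa using (hasDerivAt_id (1:ℝ)).smul_const x
    have h2 : HasDerivAt (fun t : ℝ => ϖ j (t • x))
        (fderiv ℝ (ϖ j) ((1:ℝ) • x) x) 1 :=
      (hϖd j ((1:ℝ) • x)).hasFDerivAt.comp_hasDerivAt 1 h1
    have h3 : HasDerivAt (fun t : ℝ => t ^ 2 * ϖ j x) (2 * ϖ j x) 1 := by
      simpa using (hasDerivAt_pow 2 (1:ℝ)).mul_const (ϖ j x)
    have hfun : (fun t : ℝ => ϖ j (t • x)) = fun t : ℝ => t ^ 2 * ϖ j x :=
      funext fun t => hhom j t x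
    rw [hfun] at h2
    have := h2.unique h3
    rwa [one_smul] at this
  -- derivative of y ↦ fderiv u y (e i)
  have hDcomp : ∀ i, HasFDerivAt (fun y => fderiv ℝ u y (e i)) (D2.flip (e i)) x := by
    intro i
    have := (hDud x).hasFDerivAt.clm_apply (hasFDerivAt_const (e i) x)
    simpa using this
  -- delta sums
  have hdelta : ∀ (f : Fin n → ℝ) (j : Fin n), ∑ i, f i * (e i) j = f j := by
    intro f j
    rw [Finset.sum_eq_single j]
    · simp [he]
    · intro b _ hb
      simp [he, Pi.single_apply, hb]
    · simp
  have hdelta' : ∀ (f : Fin n → ℝ) (j : Fin n), ∑ i, f i * (e j) i = f j := by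
    intro f j
    rw [Finset.sum_eq_single j]
    · simp [he]
    · intro b _ hb
      have : j ≠ b := fun h => hb h.symm
      simp [he, Pi.single_apply, this]
    · simp
  -- derivative of U at x, evaluated at e j
  have hUval : ∀ j, fderiv ℝ U x (e j) = ∑ i, x i * D2 (e j) (e i) := by
    intro j
    have hUf : U = fun y => ∑ i, y i * fderiv ℝ u y (e i) - u y := funext hU
    have hterm : ∀ i : Fin n, HasFDerivAt (fun y : Fin n → ℝ => y i * fderiv ℝ u y (e i))
        ((x i) • (D2.flip (e i)) + (fderiv ℝ u x (e i)) • (ContinuousLinearMap.proj i)) x := by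
      intro i
      simpa [add_comm] using (hproj i).fun_mul (hDcomp i)
    have hsum : HasFDerivAt (fun y => ∑ i, y i * fderiv ℝ u y (e i) - u y)
        ((∑ i, ((x i) • (D2.flip (e i)) + (fderiv ℝ u x (e i)) • (ContinuousLinearMap.proj i)))
          - fderiv ℝ u x) x :=
      (HasFDerivAt.fun_sum fun i _ => hterm i).sub (hud x).hasFDerivAt
    rw [hUf, hsum.fderiv]
    simp only [ContinuousLinearMap.sub_apply, ContinuousLinearMap.sum_apply,
      ContinuousLinearMap.add_apply, ContinuousLinearMap.smul_apply,
      ContinuousLinearMap.flip_apply, ContinuousLinearMap.proj_apply, smul_eq_mul]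
    rw [Finset.sum_add_distrib]
    have := hdelta' (fun i => fderiv ℝ u x (e i)) j
    rw [this]
    ring
  -- differentiate the PDE
  have key : ∀ i, (∑ j, (D2 (e i) (e j) * (ϖ j x - x j)
      + fderiv ℝ u x (e j) * (fderiv ℝ (ϖ j) x (e i) - (e i) j)))
      + fderiv ℝ u x (e i) = 0 := by
    intro i
    have hF : (fun y => (∑ j, fderiv ℝ u y (e j) * (ϖ j y - y j)) + u y)
        = fun _ => (0:ℝ) := by
      funext y
      simp only [he]
      linarith [hpde y]
    have hterm : ∀ j : Fin n, HasFDerivAt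
        (fun y : Fin n → ℝ => fderiv ℝ u y (e j) * (ϖ j y - y j))
        ((fderiv ℝ u x (e j)) • ((fderiv ℝ (ϖ j) x) - (ContinuousLinearMap.proj j))
          + (ϖ j x - x j) • (D2.flip (e j))) x := by
      intro j
      have hq : HasFDerivAt (fun y : Fin n → ℝ => ϖ j y - y j)
          ((fderiv ℝ (ϖ j) x) - (ContinuousLinearMap.proj j)) x :=
        (hϖd j x).hasFDerivAt.sub (hproj j)
      simpa [add_comm] using (hDcomp j).fun_mul hq
    have hsum : HasFDerivAt (fun y => (∑ j, fderiv ℝ u y (e j) * (ϖ j y - y j)) + u y)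
        ((∑ j, ((fderiv ℝ u x (e j)) • ((fderiv ℝ (ϖ j) x) - (ContinuousLinearMap.proj j))
          + (ϖ j x - x j) • (D2.flip (e j)))) + fderiv ℝ u x) x :=
      (HasFDerivAt.fun_sum fun j _ => hterm j).add (hud x).hasFDerivAt
    have hzero : HasFDerivAt (fun y => (∑ j, fderiv ℝ u y (e j) * (ϖ j y - y j)) + u y)
        (0 : (Fin n → ℝ) →L[ℝ] ℝ) x := by
      rw [hF]; exact hasFDerivAt_const 0 x
    have heq := hsum.unique hzero
    have hev := congrArg (fun L : (Fin n → ℝ) →L[ℝ] ℝ => L (e i)) heq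
    simp only [ContinuousLinearMap.add_apply, ContinuousLinearMap.sum_apply,
      ContinuousLinearMap.smul_apply, ContinuousLinearMap.sub_apply,
      ContinuousLinearMap.flip_apply, ContinuousLinearMap.proj_apply, smul_eq_mul,
      ContinuousLinearMap.zero_apply] at hev
    rw [← hev]
    congr 1
    apply Finset.sum_congr rfl
    intro j _
    ring
  -- now the algebra
  have keysum : ∑ i, x i * ((∑ j, (D2 (e i) (e j) * (ϖ j x - x j)
      + fderiv ℝ u x (e j) * (fderiv ℝ (ϖ j) x (e i) - (e i) j)))
      + fderiv ℝ u x (e i)) = 0 := by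
    apply Finset.sum_eq_zero
    intro i _
    rw [key i]; ring
  -- split keysum into three pieces
  have split : ∑ i, x i * ((∑ j, (D2 (e i) (e j) * (ϖ j x - x j)
      + fderiv ℝ u x (e j) * (fderiv ℝ (ϖ j) x (e i) - (e i) j)))
      + fderiv ℝ u x (e i))
      = (∑ j, (∑ i, x i * D2 (e i) (e j)) * (ϖ j x - x j))
        + (∑ j, fderiv ℝ u x (e j) * ((∑ i, x i * fderiv ℝ (ϖ j) x (e i)) - x j))
        + ∑ i, x i * fderiv ℝ u x (e i) := by
    have h1 : ∀ i : Fin n, x i * ((∑ j, (D2 (e i) (e j) * (ϖ j x - x j)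
        + fderiv ℝ u x (e j) * (fderiv ℝ (ϖ j) x (e i) - (e i) j)))
        + fderiv ℝ u x (e i))
        = ((∑ j, x i * D2 (e i) (e j) * (ϖ j x - x j))
          + (∑ j, (fderiv ℝ u x (e j) * (x i * fderiv ℝ (ϖ j) x (e i))
              - fderiv ℝ u x (e j) * (x i * (e i) j))))
          + x i * fderiv ℝ u x (e i) := by
      intro i
      rw [mul_add, Finset.mul_sum, ← Finset.sum_add_distrib]
      congr 1
      apply Finset.sum_congr rfl
      intro j _
      ring
    rw [Finset.sum_congr rfl fun i _ => h1 i]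
    rw [Finset.sum_add_distrib, Finset.sum_add_distrib]
    congr 1
    congr 1
    · rw [Finset.sum_comm]
      apply Finset.sum_congr rfl
      intro j _
      rw [Finset.sum_mul]
    · rw [Finset.sum_comm]
      apply Finset.sum_congr rfl
      intro j _
      have hd : ∑ i, fderiv ℝ u x (e j) * (x i * (e i) j)
          = fderiv ℝ u x (e j) * x j := by
        rw [← Finset.mul_sum]
        congr 1
        exact hdelta x j
      rw [Finset.sum_sub_distrib, hd, mul_sub, Finset.mul_sum]
  rw [split] at keysum
  -- substitute euler and hpde
  have heulersum : ∀ j : Fin n, (∑ i, x i * fderiv ℝ (ϖ j) x (e i)) = 2 * ϖ j x := by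
    intro j
    rw [← expand (fderiv ℝ (ϖ j) x), euler j]
  simp only [heulersum] at keysum
  have hUx : U x = ∑ i, x i * fderiv ℝ u x (e i) - u x := hU x
  have hpdex : ∑ j, fderiv ℝ u x (e j) * (ϖ j x - x j) = -u x := hpde x
  have hmid : ∑ j, fderiv ℝ u x (e j) * (2 * ϖ j x - x j)
      = 2 * (-u x) + ∑ j, x j * fderiv ℝ u x (e j) := by
    have h2 : ∀ j : Fin n, fderiv ℝ u x (e j) * (2 * ϖ j x - x j)
        = 2 * (fderiv ℝ u x (e j) * (ϖ j x - x j)) + x j * fderiv ℝ u x (e j) := by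
      intro j; ring
    rw [Finset.sum_congr rfl fun j _ => h2 j, Finset.sum_add_distrib,
      ← Finset.mul_sum, hpdex]
  rw [hmid] at keysum
  -- final: rewrite goal LHS using hUval and symmetry
  have hgoal : ∑ i, fderiv ℝ U x (e i) * (ϖ i x - x i)
      = ∑ j, (∑ i, x i * D2 (e i) (e j)) * (ϖ j x - x j) := by
    apply Finset.sum_congr rfl
    intro j _
    rw [hUval j]
    congr 1
    apply Finset.sum_congr rfl
    intro i _
    rw [hsymm (e j) (e i)]
  show ∑ i, fderiv ℝ U x (e i) * (ϖ i x - x i) = -2 * U x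
  rw [hgoal, hUx]
  linarith [keysum]
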